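/- arXiv:1409.6376 — 3 statements merged into one kernel-verified Lean document; each statement's English description precedes it below -/
import Mathlib

section
/- The Lie algebras L_μ and L_ν are isomorphic if and only if μ = ν or μ = ν⁻¹. -/
theorem mkLieEquivNonempty {L L' : Type} [LieRing L] [LieAlgebra ℂ L] [LieRing L']
    [LieAlgebra ℂ L'] (b : Module.Basis (Fin 3) ℂ L) (g : L ≃ₗ[ℂ] L')
    (h : ∀ i j, g ⁅b i, b j⁆ = ⁅g (b i), g (b j)⁆) : Nonempty (L ≃ₗ⁅ℂ⁆ L') := by
  have key : ∀ x y : L, g ⁅x, y⁆ = ⁅g x, g y⁆ := by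
    let D : L →ₗ[ℂ] L →ₗ[ℂ] L' := LinearMap.mk₂ ℂ (fun x y => g ⁅x, y⁆ - ⁅g x, g y⁆)
      (by intro x x' y; simp [add_lie, map_add]; abel)
      (by intro c x y; simp [smul_lie, map_smul, smul_sub])
      (by intro x y y'; simp [lie_add, map_add]; abel)
      (by intro c x y; simp [lie_smul, map_smul, smul_sub])
    have hD : D = 0 := by
      apply b.ext; intro i
      apply b.ext; intro j
      simpa [D, sub_eq_zero] using h i j
    intro x y
    have := LinearMap.congr_fun (LinearMap.congr_fun hD x) y
    simpa [D, sub_eq_zero] using this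
  exact ⟨{ g with map_lie' := key _ _ }⟩

/-- For `μ ∈ ℂ*`, `L_μ` is the 3-dimensional complex Lie algebra with basis `{α₁, α₂, β}`
and brackets `[β,α₁] = α₁`, `[β,α₂] = μ α₂`, `[α₁,α₂] = 0`.  We state:
`L_μ ≅ L_ν` if and only if `μ = ν` or `μ = ν⁻¹`. -/
theorem Lmu_iso_iff (μ ν : ℂ) (hμ : μ ≠ 0) (hν : ν ≠ 0)
    (L L' : Type) [LieRing L] [LieAlgebra ℂ L] [LieRing L'] [LieAlgebra ℂ L']
    (b : Module.Basis (Fin 3) ℂ L) (b' : Module.Basis (Fin 3) ℂ L')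
    (h1 : ⁅b 2, b 0⁆ = b 0) (h2 : ⁅b 2, b 1⁆ = μ • b 1) (h3 : ⁅b 0, b 1⁆ = 0)
    (h1' : ⁅b' 2, b' 0⁆ = b' 0) (h2' : ⁅b' 2, b' 1⁆ = ν • b' 1) (h3' : ⁅b' 0, b' 1⁆ = 0) :
    Nonempty (L ≃ₗ⁅ℂ⁆ L') ↔ (μ = ν ∨ μ = ν⁻¹) := by
  have h1r : ⁅b 0, b 2⁆ = -b 0 := by rw [← lie_skew, h1]
  have h2r : ⁅b 1, b 2⁆ = -(μ • b 1) := by rw [← lie_skew, h2]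
  have h3r : ⁅b 1, b 0⁆ = 0 := by rw [← lie_skew, h3, neg_zero]
  have h1r' : ⁅b' 0, b' 2⁆ = -b' 0 := by rw [← lie_skew, h1']
  have h2r' : ⁅b' 1, b' 2⁆ = -(ν • b' 1) := by rw [← lie_skew, h2']
  have h3r' : ⁅b' 1, b' 0⁆ = 0 := by rw [← lie_skew, h3', neg_zero]
  haveI : Module.Finite ℂ L := Module.Finite.of_basis b
  haveI : Module.Free ℂ L := Module.Free.of_basis b
  haveI : Module.Finite ℂ L' := Module.Finite.of_basis b'
  haveI : Module.Free ℂ L' := Module.Free.of_basis b'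
  constructor
  · rintro ⟨f⟩
    set a : ℂ := b'.repr (f (b 2)) 0 with ha
    set c : ℂ := b'.repr (f (b 2)) 1 with hc
    set t : ℂ := b'.repr (f (b 2)) 2 with ht
    have hfb2 : f (b 2) = a • b' 0 + c • b' 1 + t • b' 2 := by
      have := b'.sum_repr (f (b 2))
      rw [Fin.sum_univ_three] at this
      exact this.symm
    set e : L ≃ₗ[ℂ] L' := f.toLinearEquiv with he
    set B : Module.End ℂ L := LieAlgebra.ad ℂ L (b 2) with hB
    set A : Module.End ℂ L' := LieAlgebra.ad ℂ L' (f (b 2)) with hA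
    have hconj : A = e.conj B := by
      ext x
      rw [LinearEquiv.conj_apply_apply]
      show ⁅f (b 2), x⁆ = e ⁅b 2, e.symm x⁆
      have : e ⁅b 2, e.symm x⁆ = ⁅f (b 2), f (f.symm x)⁆ := f.map_lie _ _
      rw [this, f.apply_symm_apply]
    -- matrix of B
    have hMB : LinearMap.toMatrix b b B = !![1, 0, 0; 0, μ, 0; 0, 0, 0] := by
      ext i j
      fin_cases i <;> fin_cases j <;>
        simp [LinearMap.toMatrix_apply, hB, LieAlgebra.ad_apply, h1, h2, h3,
          Finsupp.single_apply, Matrix.vecHead, Matrix.vecTail]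
    have hAb0 : A (b' 0) = t • b' 0 := by
      rw [hA, LieAlgebra.ad_apply, hfb2]
      simp [add_lie, smul_lie, h3r', h1']
    have hAb1 : A (b' 1) = (t * ν) • b' 1 := by
      rw [hA, LieAlgebra.ad_apply, hfb2]
      simp [add_lie, smul_lie, h3', h2', smul_smul]
    have hAb2 : A (b' 2) = (-a) • b' 0 + (-(c * ν)) • b' 1 := by
      rw [hA, LieAlgebra.ad_apply, hfb2]
      simp [add_lie, smul_lie, h1r', h2r', smul_smul]
    have hMA : LinearMap.toMatrix b' b' A = !![t, 0, -a; 0, t * ν, -(c * ν); 0, 0, 0] := by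
      ext i j
      fin_cases i <;> fin_cases j <;>
        simp [LinearMap.toMatrix_apply, hAb0, hAb1, hAb2, Finsupp.single_apply,
          Matrix.vecHead, Matrix.vecTail, Function.comp, Function.comp_apply, Pi.zero_apply]
    have htrB : LinearMap.trace ℂ L B = 1 + μ := by
      rw [LinearMap.trace_eq_matrix_trace ℂ b, hMB, Matrix.trace_fin_three]
      norm_num [Matrix.vecHead, Matrix.vecTail, Matrix.cons_val_two]
    have htrB2 : LinearMap.trace ℂ L (B * B) = 1 + μ ^ 2 := by
      rw [LinearMap.trace_eq_matrix_trace ℂ b, LinearMap.toMatrix_mul, hMB,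
        Matrix.trace_fin_three]
      norm_num [Matrix.mul_apply, Fin.sum_univ_three, Matrix.vecHead, Matrix.vecTail, Matrix.cons_val_two]
      ring
    have htrA : LinearMap.trace ℂ L' A = t + t * ν := by
      rw [LinearMap.trace_eq_matrix_trace ℂ b', hMA, Matrix.trace_fin_three]
      norm_num [Matrix.vecHead, Matrix.vecTail, Matrix.cons_val_two]
    have htrA2 : LinearMap.trace ℂ L' (A * A) = t ^ 2 + (t * ν) ^ 2 := by
      rw [LinearMap.trace_eq_matrix_trace ℂ b', LinearMap.toMatrix_mul, hMA,
        Matrix.trace_fin_three]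
      norm_num [Matrix.mul_apply, Fin.sum_univ_three, Matrix.vecHead, Matrix.vecTail, Matrix.cons_val_two]
      ring
    have E1 : t + t * ν = 1 + μ := by
      rw [← htrA, ← htrB, hconj, LinearMap.trace_conj']
    have E2 : t ^ 2 + (t * ν) ^ 2 = 1 + μ ^ 2 := by
      rw [← htrA2, ← htrB2, hconj]
      rw [Module.End.mul_eq_comp, ← LinearEquiv.conj_comp, ← Module.End.mul_eq_comp,
        LinearMap.trace_conj']
    have hq : t ^ 2 * ν = μ := by
      linear_combination ((t + t * ν + 1 + μ) / 2) * E1 - E2 / 2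
    have hkey : (t - 1) * (t - μ) = 0 := by linear_combination t * E1 - hq
    rcases mul_eq_zero.mp hkey with h | h
    · left
      have ht1 : t = 1 := by linear_combination h
      rw [ht1] at hq; linear_combination -hq
    · right
      have ht1 : t = μ := by linear_combination h
      rw [ht1] at hq
      have hmn : μ * ν = 1 := mul_left_cancel₀ hμ (by linear_combination hq)
      field_simp
      linear_combination hmn
  · rintro (rfl | rfl)
    · exact mkLieEquivNonempty b (b.equiv b' (Equiv.refl _)) (by
        intro i j
        fin_cases i <;> fin_cases j <;>
          simp [Module.Basis.equiv_apply, h1, h2, h3, h1', h2', h3', h1r, h2r, h3r, h1r', h2r', h3r'])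
    · have hν' : ν⁻¹ ≠ 0 := inv_ne_zero hν
      set w : Fin 3 → ℂˣ := ![1, 1, Units.mk0 ν⁻¹ hν'] with hw
      set cbas : Module.Basis (Fin 3) ℂ L' := (b'.reindex (Equiv.swap 0 1)).unitsSMul w with hcb
      have hc0 : cbas 0 = b' 1 := by
        simp [hcb, Module.Basis.unitsSMul_apply, hw, Module.Basis.reindex_apply, Equiv.swap_apply_left]
      have hc1 : cbas 1 = b' 0 := by
        simp [hcb, Module.Basis.unitsSMul_apply, hw, Module.Basis.reindex_apply, Equiv.swap_apply_right]
      have hc2 : cbas 2 = ν⁻¹ • b' 2 := by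
        simp [hcb, Module.Basis.unitsSMul_apply, hw, Module.Basis.reindex_apply, Equiv.swap_apply_def]
      exact mkLieEquivNonempty b (b.equiv cbas (Equiv.refl _)) (by
        intro i j
        fin_cases i <;> fin_cases j <;>
          simp [Module.Basis.equiv_apply, h1, h2, h3, h1', h2', h3', h1r, h2r, h3r, h1r', h2r', h3r',
            hc0, hc1, hc2, smul_lie, lie_smul, smul_smul, inv_mul_cancel₀ hν])
end

section
/- The linear map φ: ℂQ_{m,n} → Ũ_{m,n} sending the path ρ_{j_s}^{k+σ(j₁)+⋯+σ(j_{s-1})} ⋯ ρ_{j₁}^{k} to α_{j_s}⋯α_{j₁} a_k is an algebra homomorphism. -/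
/-- Generators of the modified enveloping algebra `Ũ_{m,n}`: `α₁`, `α₂` and the
idempotents `a_k` (`k ∈ ℤ`). -/
inductive UGen : Type
  | a1 : UGen
  | a2 : UGen
  | e : ℤ → UGen

/-- The defining relations of `Ũ_{m,n}`: `a_k a_ℓ = δ_{kℓ} a_k`, `α₁ a_k = a_{k+m} α₁`,
`α₂ a_k = a_{k+n} α₂`, `α₁α₂ a_k = α₂α₁ a_k`. -/
inductive URel (m n : ℤ) : FreeAlgebra ℂ UGen → FreeAlgebra ℂ UGen → Prop
  | idem (k l : ℤ) : URel m n (FreeAlgebra.ι ℂ (UGen.e k) * FreeAlgebra.ι ℂ (UGen.e l))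
      (if k = l then FreeAlgebra.ι ℂ (UGen.e k) else 0)
  | c1 (k : ℤ) : URel m n (FreeAlgebra.ι ℂ UGen.a1 * FreeAlgebra.ι ℂ (UGen.e k))
      (FreeAlgebra.ι ℂ (UGen.e (k + m)) * FreeAlgebra.ι ℂ UGen.a1)
  | c2 (k : ℤ) : URel m n (FreeAlgebra.ι ℂ UGen.a2 * FreeAlgebra.ι ℂ (UGen.e k))
      (FreeAlgebra.ι ℂ (UGen.e (k + n)) * FreeAlgebra.ι ℂ UGen.a2)
  | c12 (k : ℤ) : URel m n
      (FreeAlgebra.ι ℂ UGen.a1 * FreeAlgebra.ι ℂ UGen.a2 * FreeAlgebra.ι ℂ (UGen.e k))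
      (FreeAlgebra.ι ℂ UGen.a2 * FreeAlgebra.ι ℂ UGen.a1 * FreeAlgebra.ι ℂ (UGen.e k))

/-- The modified enveloping algebra `Ũ_{m,n}`. -/
abbrev ModifiedEnveloping (m n : ℤ) : Type := RingQuot (URel m n)

/-- `α₁, α₂ ∈ Ũ_{m,n}` (`uAlpha 0` and `uAlpha 1` resp.). -/
noncomputable def uAlpha (m n : ℤ) (j : Fin 2) : ModifiedEnveloping m n :=
  RingQuot.mkAlgHom ℂ (URel m n) (FreeAlgebra.ι ℂ (if j = 0 then UGen.a1 else UGen.a2))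

/-- The idempotent `a_k ∈ Ũ_{m,n}`. -/
noncomputable def uA (m n : ℤ) (k : ℤ) : ModifiedEnveloping m n :=
  RingQuot.mkAlgHom ℂ (URel m n) (FreeAlgebra.ι ℂ (UGen.e k))

/-- Generators of the path algebra `ℂQ_{m,n}`: trivial paths `e_k` and arrows
`ρ_j^k : k → k + σ(j)` (`σ(0) = m`, `σ(1) = n`). -/
inductive PGen : Type
  | e : ℤ → PGen
  | r : Fin 2 → ℤ → PGen

/-- `σ(0) = m`, `σ(1) = n`. -/
def sigmaMN (m n : ℤ) (j : Fin 2) : ℤ := if j = 0 then m else n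

/-- The defining relations of the path algebra `ℂQ_{m,n}`: the trivial paths are
orthogonal idempotents and units for the arrows at their tails and heads. -/
inductive PRel (m n : ℤ) : FreeAlgebra ℂ PGen → FreeAlgebra ℂ PGen → Prop
  | vert (k l : ℤ) : PRel m n (FreeAlgebra.ι ℂ (PGen.e k) * FreeAlgebra.ι ℂ (PGen.e l))
      (if k = l then FreeAlgebra.ι ℂ (PGen.e k) else 0)
  | tail (j : Fin 2) (k : ℤ) :
      PRel m n (FreeAlgebra.ι ℂ (PGen.r j k) * FreeAlgebra.ι ℂ (PGen.e k))
        (FreeAlgebra.ι ℂ (PGen.r j k))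
  | head (j : Fin 2) (k : ℤ) :
      PRel m n (FreeAlgebra.ι ℂ (PGen.e (k + sigmaMN m n j)) * FreeAlgebra.ι ℂ (PGen.r j k))
        (FreeAlgebra.ι ℂ (PGen.r j k))

/-- The path algebra `ℂQ_{m,n}` of the quiver `Q_{m,n}`. -/
abbrev PathAlg (m n : ℤ) : Type := RingQuot (PRel m n)

/-- The arrow `ρ_j^k` as an element of `ℂQ_{m,n}`. -/
noncomputable def pR (m n : ℤ) (j : Fin 2) (k : ℤ) : PathAlg m n :=
  RingQuot.mkAlgHom ℂ (PRel m n) (FreeAlgebra.ι ℂ (PGen.r j k))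

/-- The trivial path `e_k` as an element of `ℂQ_{m,n}`. -/
noncomputable def pE (m n : ℤ) (k : ℤ) : PathAlg m n :=
  RingQuot.mkAlgHom ℂ (PRel m n) (FreeAlgebra.ι ℂ (PGen.e k))

/-- The path `ρ_{j_s}^{k+σ(j₁)+⋯+σ(j_{s-1})} ⋯ ρ_{j₁}^k` in `ℂQ_{m,n}`, for the word
`w = [j₁, …, j_s]` starting at the vertex `k`. -/
noncomputable def pathProd (m n : ℤ) : ℤ → List (Fin 2) → PathAlg m n
  | k, [] => pE m n k
  | k, j :: w => pathProd m n (k + sigmaMN m n j) w * pR m n j k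

/-- The element `α_{j_s} ⋯ α_{j₁} ∈ Ũ_{m,n}` for the word `w = [j₁, …, j_s]`. -/
noncomputable def alphaWord (m n : ℤ) : List (Fin 2) → ModifiedEnveloping m n
  | [] => 1
  | j :: w => alphaWord m n w * uAlpha m n j

noncomputable def phiGen (m n : ℤ) : PGen → ModifiedEnveloping m n
  | .e k => uA m n k
  | .r j k => uAlpha m n j * uA m n k

lemma uA_mul (m n k l : ℤ) :
    uA m n k * uA m n l = if k = l then uA m n k else 0 := by
  have := RingQuot.mkAlgHom_rel ℂ (URel.idem (m := m) (n := n) k l)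
  simpa [uA, map_mul, apply_ite (RingQuot.mkAlgHom ℂ (URel m n))] using this

lemma uAlpha_uA (m n : ℤ) (j : Fin 2) (k : ℤ) :
    uAlpha m n j * uA m n k = uA m n (k + sigmaMN m n j) * uAlpha m n j := by
  fin_cases j
  · have := RingQuot.mkAlgHom_rel ℂ (URel.c1 (m := m) (n := n) k)
    simpa [uA, uAlpha, sigmaMN, map_mul] using this
  · have := RingQuot.mkAlgHom_rel ℂ (URel.c2 (m := m) (n := n) k)
    simpa [uA, uAlpha, sigmaMN, map_mul] using this

lemma uA_uAlpha_uA (m n : ℤ) (j : Fin 2) (k : ℤ) :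
    uA m n (k + sigmaMN m n j) * (uAlpha m n j * uA m n k) = uAlpha m n j * uA m n k := by
  rw [uAlpha_uA, ← mul_assoc, uA_mul, if_pos rfl]

/-- The linear map `φ : ℂQ_{m,n} → Ũ_{m,n}` sending the path
`ρ_{j_s}^{k+σ(j₁)+⋯+σ(j_{s-1})} ⋯ ρ_{j₁}^k` to `α_{j_s}⋯α_{j₁} a_k` is an algebra
homomorphism. -/
theorem path_to_modified_env_hom (m n : ℤ) :
    ∃ φ : PathAlg m n →ₐ[ℂ] ModifiedEnveloping m n,
      ∀ (k : ℤ) (w : List (Fin 2)),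
        φ (pathProd m n k w) = alphaWord m n w * uA m n k := by
  have hrel : ∀ ⦃x y : FreeAlgebra ℂ PGen⦄, PRel m n x y →
      (FreeAlgebra.lift ℂ (phiGen m n)) x = (FreeAlgebra.lift ℂ (phiGen m n)) y := by
    intro x y h
    cases h with
    | vert k l =>
        simp only [map_mul, apply_ite (FreeAlgebra.lift ℂ (phiGen m n)), map_zero,
          FreeAlgebra.lift_ι_apply, phiGen]
        exact uA_mul m n k l
    | tail j k =>
        simp only [map_mul, FreeAlgebra.lift_ι_apply, phiGen]
        rw [mul_assoc, uA_mul, if_pos rfl]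
    | head j k =>
        simp only [map_mul, FreeAlgebra.lift_ι_apply, phiGen]
        exact uA_uAlpha_uA m n j k
  refine ⟨RingQuot.liftAlgHom ℂ ⟨FreeAlgebra.lift ℂ (phiGen m n), hrel⟩, ?_⟩
  intro k w
  induction w generalizing k with
  | nil =>
      simp [pathProd, pE, alphaWord, RingQuot.liftAlgHom_mkAlgHom_apply, phiGen]
  | cons j w ih =>
      simp only [pathProd, alphaWord, map_mul, ih]
      rw [mul_assoc, pR]
      rw [RingQuot.liftAlgHom_mkAlgHom_apply]
      simp only [FreeAlgebra.lift_ι_apply, phiGen]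
      rw [uA_uAlpha_uA, ← mul_assoc]
end

section
/- Let φ: Q → Q' be a covering morphism. For any path τ' in Q' and any representation V of Q, φ_!(V)(τ') = ⊕_{y : φ(y) = h(τ')} V(φ⁻¹(τ')_y), where φ⁻¹(τ')_y denotes the unique lift of τ' ending at y. -/
open DirectSum

/-- A quiver morphism `φ : Q → Q'` is a covering morphism if for every vertex `x` of `Q`
and every path `τ'` in `Q'` with head `φ(x)`, there is a unique path `τ` in `Q` with
head `x` such that `φ(τ) = τ'`. -/
def IsCovering {Q Q' : Type} [Quiver.{1} Q] [Quiver.{1} Q'] (φ : Q ⥤q Q') : Prop :=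
  ∀ (x : Q) (a' : Q') (τ' : Quiver.Path a' (φ.obj x)),
    ∃! p : Σ a : Q, Quiver.Path a x,
      (⟨φ.obj p.1, φ.mapPath p.2⟩ : Σ b : Q', Quiver.Path b (φ.obj x)) = ⟨a', τ'⟩

variable {Q Q' : Type} [Quiver.{1} Q] [Quiver.{1} Q'] (φ : Q ⥤q Q')

/-- The fiber of a quiver morphism `φ` over a vertex `x'` of `Q'`. -/
abbrev Fib (x' : Q') : Type := {x : Q // φ.obj x = x'}

/-- The unique lift (with prescribed head `x`) of a path `τ'` along a covering morphism:
`φ⁻¹(τ')_x`, bundled with its tail. -/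
noncomputable def pLift (hφ : IsCovering φ) {a' : Q'} (x : Q)
    (τ' : Quiver.Path a' (φ.obj x)) : Σ a : Q, Quiver.Path a x :=
  (hφ x a' τ').exists.choose

theorem pLift_fst (hφ : IsCovering φ) {a' : Q'} (x : Q)
    (τ' : Quiver.Path a' (φ.obj x)) : φ.obj (pLift φ hφ x τ').1 = a' :=
  congrArg Sigma.fst (hφ x a' τ').exists.choose_spec

/-- The composite of the structure maps of a representation along a path:
`V(τ) = V(ρ_n) ⋯ V(ρ₁)` for `τ = ρ_n ⋯ ρ₁`. -/
def composeAlong {Q : Type} [Quiver.{1} Q] {M : Q → Type}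
    [∀ x, AddCommGroup (M x)] [∀ x, Module ℂ (M x)]
    (Vmap : ∀ x y : Q, (x ⟶ y) → (M x →ₗ[ℂ] M y)) :
    ∀ {a b : Q}, Quiver.Path a b → (M a →ₗ[ℂ] M b)
  | _, _, Quiver.Path.nil => LinearMap.id
  | _, _, Quiver.Path.cons p e => (Vmap _ _ e).comp (composeAlong Vmap p)

variable (M : Q → Type) [∀ x, AddCommGroup (M x)] [∀ x, Module ℂ (M x)]

lemma composeAlong_comp (Vmap : ∀ x y : Q, (x ⟶ y) → (M x →ₗ[ℂ] M y))
    {a b c : Q} (p : Quiver.Path a b) (q : Quiver.Path b c) (m : M a) :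
    composeAlong Vmap (p.comp q) m = composeAlong Vmap q (composeAlong Vmap p m) := by
  induction q with
  | nil => rw [Quiver.Path.comp_nil]; simp [composeAlong]
  | cons q e ih => simp [composeAlong, Quiver.Path.comp_cons, ih]

lemma key_aux (Vmap : ∀ x y : Q, (x ⟶ y) → (M x →ₗ[ℂ] M y))
    {a' : Q'} {x : Q} (q : Σ a : Q, Quiver.Path a x) {a : Q} (τ : Quiver.Path a x)
    (hu : q = ⟨a, τ⟩) (hq1 : φ.obj q.1 = a') (ha : φ.obj a = a')
    (v : ⨁ x : Fib φ a', M x.1) :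
    composeAlong Vmap q.2 (v ⟨q.1, hq1⟩) = composeAlong Vmap τ (v ⟨a, ha⟩) := by
  subst hu; rfl

lemma key (hφ : IsCovering φ) (Vmap : ∀ x y : Q, (x ⟶ y) → (M x →ₗ[ℂ] M y))
    {a' : Q'} {x : Q} (τ' : Quiver.Path a' (φ.obj x))
    {a : Q} (τ : Quiver.Path a x)
    (h : (⟨φ.obj a, φ.mapPath τ⟩ : Σ b : Q', Quiver.Path b (φ.obj x)) = ⟨a', τ'⟩)
    (v : ⨁ x : Fib φ a', M x.1) :
    composeAlong Vmap (pLift φ hφ x τ').2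
        (v ⟨(pLift φ hφ x τ').1, pLift_fst φ hφ x τ'⟩)
      = composeAlong Vmap τ (v ⟨a, congrArg Sigma.fst h⟩) :=
  key_aux φ M Vmap _ τ
    ((hφ x a' τ').unique (hφ x a' τ').exists.choose_spec h) _ _ v

/-- Let `φ : Q → Q'` be a covering morphism, `V` a representation of `Q`, and let `W` be
the representation `φ_!(V)` of `Q'` (so `W(x') = ⊕_{x ∈ φ⁻¹(x')} V(x)` and on an arrow
`ρ'` the `y`-component of `W(ρ')v` is `V(φ⁻¹(ρ')_y)` applied to the component of `v` at
the tail of the lift).  Then for every path `τ'` in `Q'`,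
`φ_!(V)(τ') = ⊕_{y : φ(y) = h(τ')} V(φ⁻¹(τ')_y)`: the `y`-component of `W(τ')v` is
`V(φ⁻¹(τ')_y)` applied to the component of `v` at the tail of the lifted path. -/
theorem phiShriek_on_paths (hφ : IsCovering φ)
    (Vmap : ∀ x y : Q, (x ⟶ y) → (M x →ₗ[ℂ] M y))
    (Wmap : ∀ x' y' : Q', (x' ⟶ y') →
      ((⨁ x : Fib φ x', M x.1) →ₗ[ℂ] (⨁ y : Fib φ y', M y.1)))
    (hW : ∀ (x' y' : Q') (ρ' : x' ⟶ y') (v : ⨁ x : Fib φ x', M x.1) (y : Fib φ y'),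
      Wmap x' y' ρ' v y =
        composeAlong Vmap (pLift φ hφ y.1 (y.2.symm ▸ ρ'.toPath)).2
          (v ⟨(pLift φ hφ y.1 (y.2.symm ▸ ρ'.toPath)).1,
              pLift_fst φ hφ y.1 (y.2.symm ▸ ρ'.toPath)⟩)) :
    ∀ (a' b' : Q') (τ' : Quiver.Path a' b') (v : ⨁ x : Fib φ a', M x.1) (y : Fib φ b'),
      composeAlong Wmap τ' v y =
        composeAlong Vmap (pLift φ hφ y.1 (y.2.symm ▸ τ')).2
          (v ⟨(pLift φ hφ y.1 (y.2.symm ▸ τ')).1,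
              pLift_fst φ hφ y.1 (y.2.symm ▸ τ')⟩) := by
  intro a' b' τ'
  induction τ' with
  | nil =>
    intro v y
    obtain ⟨y, rfl⟩ := y
    have h : (⟨φ.obj y, φ.mapPath (Quiver.Path.nil (a := y))⟩ :
        Σ b : Q', Quiver.Path b (φ.obj y)) = ⟨φ.obj y, Quiver.Path.nil⟩ := by simp
    have := (key φ M hφ Vmap Quiver.Path.nil Quiver.Path.nil h v).symm
    simpa [composeAlong] using this
  | @cons c' b' p e ih =>
    intro v y
    obtain ⟨y, rfl⟩ := y
    obtain ⟨⟨z, ζ⟩, hz, -⟩ := hφ y c' e.toPath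
    have hz1 : φ.obj z = c' := congrArg Sigma.fst hz
    subst hz1
    have hζ : φ.mapPath ζ = e.toPath := by simpa using hz
    obtain ⟨⟨w, σ⟩, hw, -⟩ := hφ z a' p
    have hw1 : φ.obj w = a' := congrArg Sigma.fst hw
    have hcomp : (⟨φ.obj w, φ.mapPath (σ.comp ζ)⟩ :
        Σ b : Q', Quiver.Path b (φ.obj y)) = ⟨a', p.cons e⟩ := by
      have := congrArg (fun s : Σ b : Q', Quiver.Path b (φ.obj z) =>
        (⟨s.1, s.2.comp e.toPath⟩ : Σ b : Q', Quiver.Path b (φ.obj y))) hw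
      simpa [Prefunctor.mapPath_comp, hζ] using this
    calc composeAlong Wmap (p.cons e) v ⟨y, rfl⟩
        = Wmap _ _ e (composeAlong Wmap p v) ⟨y, rfl⟩ := by
          simp [composeAlong]
      _ = composeAlong Vmap ζ
            ((composeAlong Wmap p v) ⟨z, congrArg Sigma.fst hz⟩) := by
          rw [hW]
          exact key φ M hφ Vmap e.toPath ζ hz (composeAlong Wmap p v)
      _ = composeAlong Vmap ζ
            (composeAlong Vmap σ (v ⟨w, congrArg Sigma.fst hw⟩)) := by
          rw [ih v ⟨z, congrArg Sigma.fst hz⟩]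
          exact congrArg _ (key φ M hφ Vmap p σ hw v)
      _ = composeAlong Vmap (σ.comp ζ) (v ⟨w, congrArg Sigma.fst hw⟩) :=
          (composeAlong_comp M Vmap σ ζ _).symm
      _ = _ := (key φ M hφ Vmap (p.cons e) (σ.comp ζ) hcomp v).symm
end
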